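/- arXiv:2305.15738 — 2 statements merged into one kernel-verified Lean document; each statement's English description precedes it below -/
import Mathlib

section
/- Let G be an n-vertex graph and F a finite multiset of subsets of V(G) such that for every S in F, no connected component of G - S has more than n/2 vertices. Suppose no vertex of G belongs to more than c sets of F (counted with multiplicity), and |F| ≥ 3ck. If G contains a connected component with more than 3n/4 vertices, then G contains an induced path on at least k vertices. -/
open scoped Classical

/-- The graph obtained from `G` by deleting the vertices of `S`
(deleted vertices become isolated). -/
def removeVerts {V : Type*} (G : SimpleGraph V) (S : Set V) : SimpleGraph V where
  Adj u w := G.Adj u w ∧ u ∉ S ∧ w ∉ S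
  symm := ⟨fun u w h => ⟨h.1.symm, h.2.2, h.2.1⟩⟩
  loopless := ⟨fun u h => G.irrefl h.1⟩

section Helpers

variable {α β : Type*}

lemma ms_sum_map_le (s : Multiset α) (f g : α → ℕ) (h : ∀ a ∈ s, f a ≤ g a) :
    (s.map f).sum ≤ (s.map g).sum := by
  induction s using Multiset.induction_on with
  | empty => simp
  | cons a s ih =>
    simp only [Multiset.map_cons, Multiset.sum_cons]
    exact Nat.add_le_add (h a (by simp)) (ih fun b hb => h b (by simp [hb]))

lemma ms_swap (s : Multiset α) (t : Finset β) (f : α → β → ℕ) :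
    (s.map fun a => ∑ b ∈ t, f a b).sum = ∑ b ∈ t, (s.map fun a => f a b).sum := by
  induction s using Multiset.induction_on with
  | empty => simp
  | cons a s ih => simp [ih, Finset.sum_add_distrib]

lemma ms_sum_ite (s : Multiset α) (p : α → Prop) [DecidablePred p] :
    (s.map fun a => if p a then 1 else 0).sum = s.countP p := by
  induction s using Multiset.induction_on with
  | empty => simp
  | cons a s ih =>
    simp only [Multiset.map_cons, Multiset.sum_cons, Multiset.countP_cons, ih]
    omega

lemma ms_countP_mono (s : Multiset α) {p q : α → Prop} [DecidablePred p] [DecidablePred q]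
    (h : ∀ a ∈ s, p a → q a) : s.countP p ≤ s.countP q := by
  induction s using Multiset.induction_on with
  | empty => simp
  | cons a s ih =>
    simp only [Multiset.countP_cons]
    have h1 := ih fun b hb => h b (by simp [hb])
    have h2 : (if p a then 1 else 0) ≤ (if q a then 1 else 0 : ℕ) := by
      by_cases hp : p a
      · simp [hp, h a (by simp) hp]
      · simp [hp]
    omega

lemma ms_countP_or_le (s : Multiset α) (p q : α → Prop) [DecidablePred p] [DecidablePred q] :
    s.countP (fun a => p a ∨ q a) ≤ s.countP p + s.countP q := by
  induction s using Multiset.induction_on with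
  | empty => simp
  | cons a s ih =>
    simp only [Multiset.countP_cons]
    by_cases hp : p a <;> by_cases hq : q a <;> simp [hp, hq] <;> omega

lemma ms_countP_exists_le (s : Multiset α) (t : Finset β) (Q : β → α → Prop)
    [∀ b, DecidablePred (Q b)] [∀ t' : Finset β, DecidablePred (fun a => ∃ b ∈ t', Q b a)] :
    s.countP (fun a => ∃ b ∈ t, Q b a) ≤ ∑ b ∈ t, s.countP (Q b) := by
  induction t using Finset.induction_on with
  | empty =>
    have : s.countP (fun a => ∃ b ∈ (∅ : Finset β), Q b a) = 0 := by
      rw [Multiset.countP_eq_zero]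
      intro a _ h
      simp at h
    simp [this]
  | @insert b t hb ih =>
    rw [Finset.sum_insert hb]
    calc s.countP (fun a => ∃ x ∈ insert b t, Q x a)
        ≤ s.countP (fun a => Q b a ∨ ∃ x ∈ t, Q x a) := by
          apply ms_countP_mono
          rintro a _ ⟨x, hx, hQ⟩
          rcases Finset.mem_insert.mp hx with rfl | hx
          · exact Or.inl hQ
          · exact Or.inr ⟨x, hx, hQ⟩
      _ ≤ s.countP (Q b) + s.countP (fun a => ∃ x ∈ t, Q x a) := ms_countP_or_le ..
      _ ≤ s.countP (Q b) + ∑ x ∈ t, s.countP (Q x) := Nat.add_le_add_left ih _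

lemma walk_reach_remove {V : Type*} (G : SimpleGraph V) (S : Set V) :
    ∀ {a b : V} (q : G.Walk a b), (∀ w ∈ q.support, w ∉ S) → (removeVerts G S).Reachable a b := by
  intro a b q
  induction q with
  | nil => exact fun _ => SimpleGraph.Reachable.refl _
  | @cons x y z hadj q ih =>
    intro h
    have hx : x ∉ S := h x (by simp)
    have hy : y ∉ S := h y (by simp [SimpleGraph.Walk.support_cons])
    have h1 : (removeVerts G S).Adj x y := ⟨hadj, hx, hy⟩
    exact h1.reachable.trans (ih fun w hw => h w (by simp [SimpleGraph.Walk.support_cons, hw]))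

lemma exists_walk_le {V : Type*} {G : SimpleGraph V} {u v : V} (p : G.Walk u v) (i : ℕ) :
    ∀ t : ℕ, ∃ q : G.Walk (p.getVert i) (p.getVert (i + t)), q.length ≤ t := by
  intro t
  induction t with
  | zero => exact ⟨SimpleGraph.Walk.nil, by simp⟩
  | succ t ih =>
    obtain ⟨q, hq⟩ := ih
    by_cases h : i + t < p.length
    · exact ⟨q.concat (p.adj_getVert_succ h), by
        rw [SimpleGraph.Walk.length_concat]; omega⟩
    · push_neg at h
      have e : p.getVert (i + t) = p.getVert (i + (t + 1)) := by
        rw [p.getVert_of_length_le h, p.getVert_of_length_le (by omega)]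
      exact ⟨q.copy rfl e, by rw [SimpleGraph.Walk.length_copy]; omega⟩

lemma dist_getVert_le {V : Type*} {G : SimpleGraph V} {u v : V} (p : G.Walk u v) (i t : ℕ) :
    G.dist (p.getVert i) (p.getVert (i + t)) ≤ t := by
  obtain ⟨q, hq⟩ := exists_walk_le p i t
  exact (SimpleGraph.dist_le q).trans hq

lemma dist_getVert_eq {V : Type*} {G : SimpleGraph V} {u v : V} (p : G.Walk u v)
    (hp : p.length = G.dist u v) {i j : ℕ} (hij : i ≤ j) (hj : j ≤ p.length) :
    G.dist (p.getVert i) (p.getVert j) = j - i := by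
  have h1 : G.dist (p.getVert i) (p.getVert j) ≤ j - i := by
    have := dist_getVert_le p i (j - i)
    rwa [Nat.add_sub_cancel' hij] at this
  obtain ⟨q1, hq1⟩ := exists_walk_le p 0 i
  obtain ⟨q2, hq2⟩ := exists_walk_le p j (p.length - j)
  have hr : G.Reachable (p.getVert i) (p.getVert j) := by
    obtain ⟨q, _⟩ := exists_walk_le p i (j - i)
    rw [Nat.add_sub_cancel' hij] at q
    exact ⟨q⟩
  obtain ⟨qm, hqm⟩ := hr.exists_walk_length_eq_dist
  have e0 : p.getVert 0 = u := p.getVert_zero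
  have e0' : p.getVert (0 + i) = p.getVert i := by rw [Nat.zero_add]
  have eL : p.getVert (j + (p.length - j)) = v := by
    rw [Nat.add_sub_cancel' hj]; exact p.getVert_length
  have hw : G.dist u v ≤ i + (G.dist (p.getVert i) (p.getVert j) + (p.length - j)) := by
    have := SimpleGraph.dist_le (((q1.copy e0 e0').append qm).append (q2.copy rfl eL))
    simp only [SimpleGraph.Walk.length_append, SimpleGraph.Walk.length_copy] at this
    omega
  omega

lemma induced_path_of_dist {V : Type*} {G : SimpleGraph V} {u v : V} (hr : G.Reachable u v) :
    ∃ f : Fin (G.dist u v + 1) → V, Function.Injective f ∧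
      ∀ i j : Fin (G.dist u v + 1), i ≠ j →
        (G.Adj (f i) (f j) ↔ ((i : ℕ) + 1 = (j : ℕ) ∨ (j : ℕ) + 1 = (i : ℕ))) := by
  obtain ⟨p, hp⟩ := hr.exists_walk_length_eq_dist
  have key : ∀ i j : ℕ, i ≤ j → j ≤ G.dist u v → G.dist (p.getVert i) (p.getVert j) = j - i :=
    fun i j hij hj => dist_getVert_eq p hp hij (by omega)
  refine ⟨fun i => p.getVert i, ?_, ?_⟩
  · intro i j hf
    have hf' : p.getVert (i : ℕ) = p.getVert (j : ℕ) := hf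
    by_contra hne
    have hv : (i : ℕ) ≠ (j : ℕ) := fun h => hne (Fin.ext h)
    rcases Nat.lt_or_ge (i : ℕ) (j : ℕ) with h | h
    · have hd := key i j (Nat.le_of_lt h) (by omega)
      rw [hf', SimpleGraph.dist_self] at hd
      omega
    · have h' : (j : ℕ) < (i : ℕ) := by omega
      have hd := key j i (Nat.le_of_lt h') (by omega)
      rw [hf', SimpleGraph.dist_self] at hd
      omega
  · intro i j hne
    have hv : (i : ℕ) ≠ (j : ℕ) := fun h => hne (Fin.ext h)
    constructor
    · intro hadj
      have h1 : G.dist (p.getVert (i : ℕ)) (p.getVert (j : ℕ)) = 1 :=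
        SimpleGraph.dist_eq_one_iff_adj.mpr hadj
      rcases Nat.lt_or_ge (i : ℕ) (j : ℕ) with h | h
      · have hd := key i j (Nat.le_of_lt h) (by omega)
        omega
      · have h' : (j : ℕ) < (i : ℕ) := by omega
        have hd := key j i (Nat.le_of_lt h') (by omega)
        rw [SimpleGraph.dist_comm] at h1
        omega
    · intro hc
      rcases hc with hc | hc
      · have hlt : (i : ℕ) < p.length := by omega
        have := p.adj_getVert_succ hlt
        rwa [hc] at this
      · have hlt : (j : ℕ) < p.length := by omega
        have := p.adj_getVert_succ hlt
        rw [hc] at this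
        exact this.symm

end Helpers

section Cnt

variable {α β : Type*}

/-- Number of elements of `F` (with multiplicity) satisfying `P`, classically. -/
noncomputable def cnt (F : Multiset α) (P : α → Prop) : ℕ :=
  (F.map (fun S => if P S then 1 else 0)).sum

lemma cnt_empty (P : α → Prop) : cnt (0 : Multiset α) P = 0 := by simp [cnt]

lemma cnt_cons (a : α) (F : Multiset α) (P : α → Prop) :
    cnt (a ::ₘ F) P = (if P a then 1 else 0) + cnt F P := by simp [cnt]

lemma cnt_mono (F : Multiset α) {P Q : α → Prop} (h : ∀ a ∈ F, P a → Q a) :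
    cnt F P ≤ cnt F Q := by
  induction F using Multiset.induction_on with
  | empty => simp [cnt_empty]
  | cons a F ih =>
    rw [cnt_cons, cnt_cons]
    have h1 := ih fun b hb => h b (by simp [hb])
    have h2 : (if P a then 1 else 0) ≤ (if Q a then 1 else 0 : ℕ) := by
      by_cases hp : P a
      · simp [hp, h a (by simp) hp]
      · simp [hp]
    omega

lemma cnt_or_le (F : Multiset α) (P Q : α → Prop) :
    cnt F (fun a => P a ∨ Q a) ≤ cnt F P + cnt F Q := by
  induction F using Multiset.induction_on with
  | empty => simp [cnt_empty]
  | cons a F ih =>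
    rw [cnt_cons, cnt_cons, cnt_cons]
    by_cases hp : P a <;> by_cases hq : Q a <;> simp [hp, hq] <;> omega

lemma cnt_false (F : Multiset α) {P : α → Prop} (h : ∀ a ∈ F, ¬ P a) : cnt F P = 0 := by
  induction F using Multiset.induction_on with
  | empty => simp [cnt_empty]
  | cons a F ih =>
    rw [cnt_cons]
    have h1 := ih fun b hb => h b (by simp [hb])
    simp [h a (by simp), h1]

lemma cnt_exists_le (F : Multiset α) (t : Finset β) (Q : β → α → Prop) :
    cnt F (fun a => ∃ b ∈ t, Q b a) ≤ ∑ b ∈ t, cnt F (Q b) := by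
  induction t using Finset.induction_on with
  | empty =>
    rw [cnt_false F (fun a _ h => by simpa using h)]
    simp
  | @insert b t hb ih =>
    rw [Finset.sum_insert hb]
    calc cnt F (fun a => ∃ x ∈ insert b t, Q x a)
        ≤ cnt F (fun a => Q b a ∨ ∃ x ∈ t, Q x a) := by
          apply cnt_mono
          rintro a _ ⟨x, hx, hQ⟩
          rcases Finset.mem_insert.mp hx with rfl | hx
          · exact Or.inl hQ
          · exact Or.inr ⟨x, hx, hQ⟩
      _ ≤ cnt F (Q b) + cnt F (fun a => ∃ x ∈ t, Q x a) := cnt_or_le ..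
      _ ≤ cnt F (Q b) + ∑ x ∈ t, cnt F (Q x) := Nat.add_le_add_left ih _

lemma cnt_eq_card_filter (F : Multiset α) (P : α → Prop) (inst : ∀ a, Decidable (P a)) :
    cnt F P = Multiset.card (@Multiset.filter α P inst F) := by
  induction F using Multiset.induction_on with
  | empty => simp [cnt_empty]
  | cons a F ih =>
    rw [cnt_cons, ih]
    by_cases hp : P a <;> simp [hp, Multiset.filter_cons] <;> omega

lemma sum_ite_eq_cnt (F : Multiset α) (P : α → Prop) (inst : ∀ a, Decidable (P a)) :
    (F.map (fun a => @ite ℕ (P a) (inst a) 1 0)).sum = cnt F P := by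
  induction F using Multiset.induction_on with
  | empty => simp [cnt_empty]
  | cons a F ih =>
    rw [Multiset.map_cons, Multiset.sum_cons, ih, cnt_cons]
    by_cases hp : P a <;> simp [hp]

end Cnt

/-- If `F` is a multiset of `n/2`-balanced separators of an `n`-vertex graph `G`, no
vertex belongs to more than `c` sets of `F` (with multiplicity), `|F| ≥ 3ck`, and `G`
has a connected component with more than `3n/4` vertices, then `G` contains an induced
path on at least `k` vertices. -/
theorem cant_pack_balanced_separators {V : Type*} [Fintype V]
    (G : SimpleGraph V) (F : Multiset (Set V)) (c k : ℕ) (hc : 0 < c) (hk : 0 < k)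
    (hbal : ∀ S ∈ F, ∀ v : V, v ∉ S →
      2 * {u : V | (removeVerts G S).Reachable u v}.ncard ≤ Fintype.card V)
    (hmult : ∀ v : V, (F.filter fun S => v ∈ S).card ≤ c)
    (hF : 3 * c * k ≤ Multiset.card F)
    (hbig : ∃ v : V, 3 * Fintype.card V < 4 * {u : V | G.Reachable u v}.ncard) :
    ∃ (m : ℕ) (f : Fin m → V), k ≤ m ∧ Function.Injective f ∧
      ∀ i j : Fin m, i ≠ j →
        (G.Adj (f i) (f j) ↔ ((i : ℕ) + 1 = (j : ℕ) ∨ (j : ℕ) + 1 = (i : ℕ))) := by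
  classical
  obtain ⟨v₀, hv₀⟩ := hbig
  set n := Fintype.card V with hn
  set Cs : Finset V := Set.toFinset {u | G.Reachable u v₀} with hCs
  have hmemCs : ∀ u, u ∈ Cs ↔ G.Reachable u v₀ := by
    intro u; rw [hCs, Set.mem_toFinset]; rfl
  set m := Cs.card with hm
  have hmcard : 3 * n < 4 * m := by
    have he : ({u | G.Reachable u v₀} : Set V).ncard = m := by
      rw [hm, hCs, Set.ncard_eq_toFinset_card']
    omega
  have hv₀Cs : v₀ ∈ Cs := (hmemCs v₀).mpr (SimpleGraph.Reachable.refl v₀)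
  have hm1 : 1 ≤ m := Finset.card_pos.mpr ⟨v₀, hv₀Cs⟩
  have hmn : m ≤ n := by
    have := Finset.card_le_univ Cs
    simpa [hn] using this
  by_cases hA : ∃ u ∈ Cs, ∃ u' ∈ Cs, k ≤ G.dist u u' + 1
  · obtain ⟨u, hu, u', hu', hd⟩ := hA
    have hr : G.Reachable u u' := ((hmemCs u).mp hu).trans ((hmemCs u').mp hu').symm
    obtain ⟨f, hinj, hiff⟩ := induced_path_of_dist hr
    exact ⟨G.dist u u' + 1, f, hd, hinj, hiff⟩
  · exfalso
    push_neg at hA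
    have hk2 : 2 ≤ k := by
      have := hA v₀ hv₀Cs v₀ hv₀Cs
      rw [SimpleGraph.dist_self] at this
      omega
    have hFc1 : 1 ≤ Multiset.card F := by nlinarith [hF, hc, hk]
    rcases Nat.lt_or_ge n 2 with hn1 | hn2
    · -- n = 1 : every separator must contain v₀, contradicting the multiplicity bound
      have hall : ∀ S ∈ F, v₀ ∈ S := by
        intro S hS
        by_contra hvS
        have hb := hbal S hS v₀ hvS
        have hmem : v₀ ∈ {u : V | (removeVerts G S).Reachable u v₀} := by
          simp only [Set.mem_setOf_eq]
          exact SimpleGraph.Reachable.refl v₀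
        have h1 : 0 < ({u : V | (removeVerts G S).Reachable u v₀} : Set V).ncard :=
          (Set.ncard_pos (Set.toFinite _)).mpr ⟨v₀, hmem⟩
        omega
      have hfe : F.filter (fun S => v₀ ∈ S) = F := Multiset.filter_eq_self.mpr hall
      have h2 := hmult v₀
      rw [hfe] at h2
      nlinarith [hF, hc, hk2, h2]
    · -- main double counting
      obtain ⟨K, rfl⟩ : ∃ K, k = K + 1 := ⟨k - 1, by omega⟩
      have hK1 : 1 ≤ K := by omega
      set Bad : Set V → V → V → Prop :=
        fun S x y => x ∈ S ∨ y ∈ S ∨ ¬ (removeVerts G S).Reachable x y with hBad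
      set T : Set V → V → Finset V :=
        fun S x => Cs.filter (fun y => y ≠ x ∧ Bad S x y) with hT
      set inr : Set V → ℕ := fun S => ∑ x ∈ Cs, (T S x).card with hinr
      set N : ℕ := (F.map inr).sum with hN
      set Fc := Multiset.card F with hFc
      -- lower bound on N
      have hlow : ∀ S ∈ F, 2 * (m * m) ≤ 2 * inr S + m * n := by
        intro S hS
        have hptw : ∀ x ∈ Cs, 2 * m ≤ 2 * (T S x).card + n := by
          intro x hx
          by_cases hxS : x ∈ S
          · have hsub : Cs.erase x ⊆ T S x := by
              intro y hy
              rcases Finset.mem_erase.mp hy with ⟨hyx, hyC⟩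
              exact Finset.mem_filter.mpr ⟨hyC, hyx, Or.inl hxS⟩
            have hcard := Finset.card_le_card hsub
            rw [Finset.card_erase_of_mem hx] at hcard
            omega
          · set R : Set V := {w : V | (removeVerts G S).Reachable w x} with hR
            have hbalx : 2 * R.ncard ≤ n := hbal S hS x hxS
            have hRfin : R.ncard = R.toFinset.card := Set.ncard_eq_toFinset_card' R
            have hxR : x ∈ R.toFinset := by
              rw [Set.mem_toFinset, hR]
              simp only [Set.mem_setOf_eq]
              exact SimpleGraph.Reachable.refl x
            set Gd : Finset V := Cs.filter (fun y => y ≠ x ∧ ¬ Bad S x y) with hGd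
            have hsubG : Gd ⊆ R.toFinset.erase x := by
              intro y hy
              rcases Finset.mem_filter.mp hy with ⟨hyC, hyx, hnb⟩
              rw [Finset.mem_erase, Set.mem_toFinset]
              refine ⟨hyx, ?_⟩
              simp only [hBad] at hnb
              push_neg at hnb
              exact hnb.2.2.symm
            have hGcard : Gd.card + 1 ≤ R.toFinset.card := by
              have h1 := Finset.card_le_card hsubG
              rw [Finset.card_erase_of_mem hxR] at h1
              have h2 : 1 ≤ R.toFinset.card := Finset.card_pos.mpr ⟨x, hxR⟩
              omega
            have hcover : Cs.erase x ⊆ T S x ∪ Gd := by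
              intro y hy
              rcases Finset.mem_erase.mp hy with ⟨hyx, hyC⟩
              by_cases hb : Bad S x y
              · exact Finset.mem_union_left _ (Finset.mem_filter.mpr ⟨hyC, hyx, hb⟩)
              · exact Finset.mem_union_right _ (Finset.mem_filter.mpr ⟨hyC, hyx, hb⟩)
            have hcc : m - 1 ≤ (T S x).card + Gd.card := by
              have h1 := Finset.card_le_card hcover
              have h2 := Finset.card_union_le (T S x) Gd
              rw [Finset.card_erase_of_mem hx] at h1
              omega
            omega
        calc 2 * (m * m) = ∑ _x ∈ Cs, 2 * m := by
              rw [Finset.sum_const, smul_eq_mul, ← hm]; ring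
          _ ≤ ∑ x ∈ Cs, (2 * (T S x).card + n) := Finset.sum_le_sum hptw
          _ = 2 * inr S + m * n := by
              rw [Finset.sum_add_distrib, Finset.sum_const, smul_eq_mul, ← hm, hinr,
                Finset.mul_sum]
      have hNlow : Fc * (2 * (m * m)) ≤ 2 * N + Fc * (m * n) := by
        have h1 : (F.map (fun _ => 2 * (m * m))).sum ≤
            (F.map (fun S => 2 * inr S + m * n)).sum :=
          ms_sum_map_le _ _ _ (fun S hS => hlow S hS)
        rw [Multiset.map_const', Multiset.sum_replicate, smul_eq_mul] at h1
        rw [Multiset.sum_map_add] at h1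
        rw [Multiset.sum_map_mul_left] at h1
        rw [Multiset.map_const', Multiset.sum_replicate, smul_eq_mul] at h1
        rw [hN, hFc]
        omega
      -- upper bound on N
      have hmm : ∀ z : V, cnt F (fun S => z ∈ S) ≤ c := by
        intro z
        rw [cnt_eq_card_filter F (fun S => z ∈ S) (fun S => Classical.propDecidable _)]
        convert hmult z using 2
      have hpair : ∀ x ∈ Cs, ∀ y ∈ Cs,
          cnt F (fun S => y ≠ x ∧ Bad S x y) ≤ c * K := by
        intro x hx y hy
        by_cases hxy : y = x
        · subst hxy
          have hz : cnt F (fun S => y ≠ y ∧ Bad S y y) = 0 :=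
            cnt_false F (fun S _ h => h.1 rfl)
          omega
        · have hr : G.Reachable x y := ((hmemCs x).mp hx).trans ((hmemCs y).mp hy).symm
          have hd1 : 1 ≤ G.dist x y := hr.pos_dist_of_ne (fun h => hxy h.symm)
          have hdk : G.dist x y + 1 < K + 1 := hA x hx y hy
          obtain ⟨p, hp⟩ := hr.exists_walk_length_eq_dist
          set d := G.dist x y with hd
          have hsep : ∀ S ∈ F, (y ≠ x ∧ Bad S x y) →
              (x ∈ S ∨ (y ∈ S ∨ ∃ i ∈ Finset.Icc 1 (d - 1), p.getVert i ∈ S)) := by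
            intro S hS hb
            rcases hb.2 with h | h | h
            · exact Or.inl h
            · exact Or.inr (Or.inl h)
            · by_cases hxS : x ∈ S
              · exact Or.inl hxS
              by_cases hyS : y ∈ S
              · exact Or.inr (Or.inl hyS)
              have hns : ¬ (∀ w ∈ p.support, w ∉ S) :=
                fun hall => h (walk_reach_remove G S p hall)
              push_neg at hns
              obtain ⟨w, hwsup, hwS⟩ := hns
              obtain ⟨i, hgi, hile⟩ :=
                SimpleGraph.Walk.mem_support_iff_exists_getVert.mp hwsup
              refine Or.inr (Or.inr ⟨i, ?_, by rw [hgi]; exact hwS⟩)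
              rw [Finset.mem_Icc]
              have hiled : i ≤ d := by omega
              have hi0 : i ≠ 0 := by
                intro h0
                rw [h0, p.getVert_zero] at hgi
                exact hxS (hgi ▸ hwS)
              have hid : i ≠ d := by
                intro h0
                have hgv : p.getVert i = y := by
                  rw [h0, ← hp]
                  exact p.getVert_length
                rw [hgv] at hgi
                exact hyS (hgi ▸ hwS)
              omega
          have hcex : cnt F (fun S => ∃ i ∈ Finset.Icc 1 (d - 1), p.getVert i ∈ S) ≤
              (d - 1) * c := by
            calc cnt F (fun S => ∃ i ∈ Finset.Icc 1 (d - 1), p.getVert i ∈ S)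
                ≤ ∑ i ∈ Finset.Icc 1 (d - 1), cnt F (fun S => p.getVert i ∈ S) :=
                  cnt_exists_le _ _ _
              _ ≤ ∑ _i ∈ Finset.Icc 1 (d - 1), c :=
                  Finset.sum_le_sum (fun i _ => hmm (p.getVert i))
              _ = (d - 1) * c := by
                  have hic : d - 1 + 1 - 1 = d - 1 := by omega
                  rw [Finset.sum_const, smul_eq_mul, Nat.card_Icc, hic]
          calc cnt F (fun S => y ≠ x ∧ Bad S x y)
              ≤ cnt F (fun S =>
                  x ∈ S ∨ (y ∈ S ∨ ∃ i ∈ Finset.Icc 1 (d - 1), p.getVert i ∈ S)) :=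
                cnt_mono F hsep
            _ ≤ cnt F (fun S => x ∈ S) +
                cnt F (fun S => y ∈ S ∨ ∃ i ∈ Finset.Icc 1 (d - 1), p.getVert i ∈ S) :=
                cnt_or_le ..
            _ ≤ cnt F (fun S => x ∈ S) + (cnt F (fun S => y ∈ S) +
                cnt F (fun S => ∃ i ∈ Finset.Icc 1 (d - 1), p.getVert i ∈ S)) :=
                Nat.add_le_add_left (cnt_or_le ..) _
            _ ≤ c + (c + (d - 1) * c) :=
                Nat.add_le_add (hmm x) (Nat.add_le_add (hmm y) hcex)
            _ ≤ c * K := by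
                have h1 : d - 1 + 2 ≤ K := by omega
                calc c + (c + (d - 1) * c) = ((d - 1) + 2) * c := by ring
                  _ ≤ K * c := Nat.mul_le_mul_right c h1
                  _ = c * K := Nat.mul_comm _ _
      have hNup : N ≤ m * (m * (c * K)) := by
        have hform : N = ∑ x ∈ Cs, ∑ y ∈ Cs, cnt F (fun S => y ≠ x ∧ Bad S x y) := by
          rw [hN]
          have h1 : inr = fun S => ∑ x ∈ Cs, ∑ y ∈ Cs,
              (if (y ≠ x ∧ Bad S x y) then 1 else 0) := by
            funext S
            rw [hinr]
            refine Finset.sum_congr rfl ?_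
            intro x _
            rw [hT]
            exact Finset.card_filter _ _
          rw [h1, ms_swap]
          refine Finset.sum_congr rfl ?_
          intro x _
          rw [ms_swap]
          refine Finset.sum_congr rfl ?_
          intro y _
          exact sum_ite_eq_cnt F _ _
        rw [hform]
        calc ∑ x ∈ Cs, ∑ y ∈ Cs, cnt F (fun S => y ≠ x ∧ Bad S x y)
            ≤ ∑ _x ∈ Cs, ∑ _y ∈ Cs, c * K := by
              refine Finset.sum_le_sum ?_
              intro x hx
              exact Finset.sum_le_sum (fun y hy => hpair x hx y hy)
          _ = m * (m * (c * K)) := by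
              rw [Finset.sum_const, smul_eq_mul, Finset.sum_const, smul_eq_mul, ← hm]
      -- final contradiction
      have P1 : Fc * m * (3 * n + 1) ≤ Fc * m * (4 * m) :=
        Nat.mul_le_mul_left _ (by omega)
      have P2 : (3 * c * (K + 1)) * (m * m) ≤ Fc * (m * m) :=
        Nat.mul_le_mul_right _ hF
      have key1 : Fc * (2 * (m * m)) ≤ 2 * (m * (m * (c * K))) + Fc * (m * n) := by
        have h1 := Nat.add_le_add_right (Nat.mul_le_mul_left 2 hNup) (Fc * (m * n))
        omega
      have hmc : 1 ≤ m * m * c := by nlinarith [hm1, hc]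
      nlinarith [key1, P1, P2, hmc]
end

section
/- Let G be a graph, F a multiset of vertex subsets of G, and suppose every vertex of G belongs to at most c sets of F (with multiplicity). If a, b are vertices such that for at least ck sets S in F (with multiplicity), a and b lie in different connected components of G - S or at least one of a, b lies in S, then every induced path in G from a to b has at least k vertices. -/
open scoped Classical

lemma card_filter_exists_mem {V : Type*} (F : Multiset (Set V)) (c : ℕ)
    (hmult : ∀ v : V, (F.filter fun S => v ∈ S).card ≤ c) :
    ∀ l : List V, (F.filter fun S => ∃ v ∈ l, v ∈ S).card ≤ c * l.length := by
  intro l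
  induction l with
  | nil => simp [Multiset.filter_eq_nil]
  | cons x l ih =>
      have e1 : (F.filter fun S => ∃ v ∈ x :: l, v ∈ S)
          = F.filter fun S => x ∈ S ∨ ∃ v ∈ l, v ∈ S := by
        apply Multiset.filter_congr
        intro S _
        simp
      have hle : (F.filter fun S => ∃ v ∈ x :: l, v ∈ S) ≤
          (F.filter fun S => x ∈ S) + (F.filter fun S => ∃ v ∈ l, v ∈ S) := by
        rw [e1, Multiset.le_iff_count]
        intro S
        simp only [Multiset.count_filter, Multiset.count_add]
        split_ifs with h1 h2 h3 h4 h5 <;> simp_all <;> omega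
      calc (F.filter fun S => ∃ v ∈ x :: l, v ∈ S).card
          ≤ ((F.filter fun S => x ∈ S) + (F.filter fun S => ∃ v ∈ l, v ∈ S)).card :=
            Multiset.card_le_card hle
        _ = (F.filter fun S => x ∈ S).card + (F.filter fun S => ∃ v ∈ l, v ∈ S).card := by
            simp
        _ ≤ c + c * l.length := Nat.add_le_add (hmult x) ih
        _ = c * (x :: l).length := by simp [Nat.mul_succ, Nat.mul_add, Nat.add_comm]

/-- If every vertex belongs to at most `c` sets of the multiset `F`, and at least `c·k`
sets `S` of `F` separate `a` from `b` (meaning `a ∈ S`, or `b ∈ S`, or `a` and `b` lie in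
different components of `G - S`), then every induced path from `a` to `b` has at least
`k` vertices. -/
theorem separated_pair_long_induced_path {V : Type*} [Fintype V]
    (G : SimpleGraph V) (F : Multiset (Set V)) (c k : ℕ) (hc : 0 < c) (hk : 0 < k)
    (a b : V)
    (hmult : ∀ v : V, (F.filter fun S => v ∈ S).card ≤ c)
    (hsep : c * k ≤ (F.filter fun S =>
      a ∈ S ∨ b ∈ S ∨ ¬ (removeVerts G S).Reachable a b).card) :
    ∀ p : G.Walk a b, p.IsPath →
      (∀ i j : ℕ, i + 1 < j → j ≤ p.length → ¬ G.Adj (p.getVert i) (p.getVert j)) →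
      k ≤ p.length + 1 := by
  intro p _hp _hind
  -- every separating set meets the support of p
  have hmono : (F.filter fun S => a ∈ S ∨ b ∈ S ∨ ¬ (removeVerts G S).Reachable a b) ≤
      F.filter fun S => ∃ v ∈ p.support, v ∈ S := by
    apply Multiset.monotone_filter_right
    intro S hS
    rcases hS with h | h | h
    · exact ⟨a, p.start_mem_support, h⟩
    · exact ⟨b, p.end_mem_support, h⟩
    · by_contra hno
      push_neg at hno
      apply h
      refine ⟨p.transfer (removeVerts G S) ?_⟩
      intro e he
      induction e using Sym2.ind with
      | _ u w =>
        exact show G.Adj u w ∧ u ∉ S ∧ w ∉ S from ⟨p.adj_of_mem_edges he, hno u (p.fst_mem_support_of_mem_edges he),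
          hno w (p.snd_mem_support_of_mem_edges he)⟩
  have h1 : c * k ≤ c * p.support.length :=
    le_trans hsep (le_trans (Multiset.card_le_card hmono)
      (card_filter_exists_mem F c hmult p.support))
  have := Nat.le_of_mul_le_mul_left h1 hc
  simpa [SimpleGraph.Walk.length_support] using this
end
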